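/- Let A, B be integers with Aλ + Bm = 1 and set z := y^A · f(x)^B ∈ F^×. Then the divisor of z is P₁ + ⋯ + P_r − rP_∞; explicitly: v_{P_i}(z) = 1 for every place P_i lying over (x − α_i)𝔽_q[x] (1 ≤ i ≤ r), v_Q(z) = 0 for every finite place Q of F not lying over any (x − α_i)𝔽_q[x], and v_{P_∞}(z) = −r for every infinite place P_∞ of F. -/

import Mathlib

set_option synthInstance.maxHeartbeats 1000000
set_option maxHeartbeats 1000000

noncomputable section

open Polynomial IsDedekindDomain

/-- The valuation ring at infinity of `𝔽_q(x)`: rational functions `g/h` with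
`deg g ≤ deg h`. -/
def Oinfty (Fq : Type*) [Field Fq] : ValuationSubring (RatFunc Fq) :=
  letI := Classical.decEq (RatFunc Fq)
  (FunctionField.inftyValuation Fq).valuationSubring

section Places

variable {R S F : Type*} [CommRing R] [IsDedekindDomain R] [CommRing S] [IsDedekindDomain S]
  [Field F] [Algebra R F] [IsFractionRing R F] [Algebra S F] [IsFractionRing S F]

/-- The multiplicative valuation attached to a place of `F` (a height-one prime of the
finite-part ring `R` or of the infinite-part ring `S`). -/
def placeVal : HeightOneSpectrum R ⊕ HeightOneSpectrum S → F → WithZero (Multiplicative ℤ)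
  | .inl v, h => v.valuation F h
  | .inr v, h => v.valuation F h

/-- `v_P(h) = n` for a place `P` of `F` (the valuation is written multiplicatively,
so this reads `placeVal P h = ofAdd (-n)`). -/
def pvEq (P : HeightOneSpectrum R ⊕ HeightOneSpectrum S) (h : F) (n : ℤ) : Prop :=
  placeVal P h =
    ((Multiplicative.ofAdd (-n) : Multiplicative ℤ) : WithZero (Multiplicative ℤ))

/-- The Weierstrass semigroup `H(Q₁, …, Q_l)`: `s ∈ H(Q₁, …, Q_l)` iff there is a nonzero
`h ∈ F` with `v_{Q i}(h) = -(s i)` for all `i` and `v_P(h) ≥ 0` for every other place `P`. -/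
def WSemigroup {ι : Type*} (Q : ι → HeightOneSpectrum R ⊕ HeightOneSpectrum S)
    (s : ι → ℕ) : Prop :=
  ∃ h : F, h ≠ 0 ∧ (∀ i, pvEq (Q i) h (-(s i : ℤ))) ∧
    ∀ P : HeightOneSpectrum R ⊕ HeightOneSpectrum S, (∀ i, P ≠ Q i) → placeVal P h ≤ 1

/-- The minimal generating set `Γ(Q₁, …, Q_l)`: tuples `n` of positive integers that are,
for some `i`, minimal (componentwise) in `{p ∈ H(Q₁, …, Q_l) : p i = n i}`. -/
def WGamma {l : ℕ} (Q : Fin l → HeightOneSpectrum R ⊕ HeightOneSpectrum S)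
    (n : Fin l → ℕ) : Prop :=
  (∀ i, 0 < n i) ∧
    ∃ i, Minimal (fun s : Fin l → ℕ => WSemigroup (F := F) Q s ∧ s i = n i) n

end Places


open Multiplicative in
lemma card_le_of_distinct_val {K F : Type*} [Field K] [Field F] [Algebra K F]
    [FiniteDimensional K F]
    (v : Valuation F (WithZero (Multiplicative ℤ))) {d : ℤ}
    (hK : ∀ g : K, g ≠ 0 → ∃ k : ℤ, v (algebraMap K F g) = ((ofAdd (d * k) : Multiplicative ℤ) : WithZero (Multiplicative ℤ)))
    {N : ℕ} (x : Fin N → F) (a : Fin N → ℤ)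
    (hx : ∀ i, v (x i) = ((ofAdd (a i) : Multiplicative ℤ) : WithZero (Multiplicative ℤ)))
    (hdist : ∀ i j : Fin N, ∀ k : ℤ, a i = a j + d * k → i = j) :
    N ≤ Module.finrank K F := by
  have hli : LinearIndependent K x := by
    rw [Fintype.linearIndependent_iff]
    intro g hg
    by_contra hne
    push_neg at hne
    obtain ⟨i₀, hi₀⟩ := hne
    letI : DecidablePred (fun i : Fin N => g i ≠ 0) := fun i => Classical.propDecidable _
    set s : Finset (Fin N) := Finset.univ.filter (fun i => g i ≠ 0) with hs
    have hsne : s.Nonempty := ⟨i₀, by simp [hs, hi₀]⟩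
    have hval : ∀ i ∈ s, ∃ k : ℤ, v (g i • x i) = ((ofAdd (d * k + a i) : Multiplicative ℤ) : WithZero (Multiplicative ℤ)) := by
      intro i hi
      have hgi : g i ≠ 0 := by simpa [hs] using hi
      obtain ⟨k, hk⟩ := hK (g i) hgi
      exact ⟨k, by rw [Algebra.smul_def, v.map_mul, hk, hx i, ← WithZero.coe_mul, ← ofAdd_add]⟩
    obtain ⟨j, hj, hmax⟩ := s.exists_max_image (fun i => v (g i • x i)) hsne
    obtain ⟨kj, hkj⟩ := hval j hj
    have hsum : ∑ i ∈ s, (g i • x i : F) = 0 := by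
      rw [← hg]
      refine Finset.sum_subset (f := fun i => g i • x i) (Finset.subset_univ s) ?_
      intro i _ hi
      have : g i = 0 := by
        by_contra h
        exact hi (by simp [hs, h])
      simp [this]
    have hlt : ∀ i, i ∈ s ∧ i ≠ j → v (g i • x i) < v (g j • x j) := by
      intro i hi
      obtain ⟨his, hij'⟩ := hi
      obtain ⟨ki, hki⟩ := hval i his
      refine lt_of_le_of_ne (hmax i his) ?_
      intro heq
      rw [hki, hkj] at heq
      have : d * ki + a i = d * kj + a j := by exact_mod_cast WithZero.coe_inj.mp heq
      exact hij' (hdist i j (kj - ki) (by linarith))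
    have := v.map_sum_eq_of_lt (f := fun i => g i • x i) hj (fun i hi => by
      simp only [Finset.mem_sdiff, Finset.mem_singleton] at hi
      exact hlt i ⟨hi.1, hi.2⟩)
    rw [hsum, v.map_zero, hkj] at this
    exact WithZero.coe_ne_zero this.symm
  simpa using hli.fintype_card_le_finrank

lemma int_val_eq_one_iff {R : Type*} [CommRing R] [IsDedekindDomain R]
    (w : HeightOneSpectrum R) (u : R) : w.intValuation u = 1 ↔ u ∉ w.asIdeal := by
  constructor
  · intro h hu
    have := (w.intValuation_lt_one_iff_dvd u).mpr (Ideal.dvd_span_singleton.mpr hu)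
    rw [h] at this
    exact lt_irrefl _ this
  · intro h
    rcases lt_or_eq_of_le (w.intValuation_le_one u) with hlt | heq
    · exact absurd (Ideal.dvd_span_singleton.mp ((w.intValuation_lt_one_iff_dvd u).mp hlt)) h
    · exact heq

open Multiplicative in
lemma coe_pow_ofAdd (c : Multiplicative ℤ) (k : ℕ) :
    ((c : WithZero (Multiplicative ℤ)) ^ k) = ((ofAdd ((k : ℤ) * toAdd c) : Multiplicative ℤ) : WithZero (Multiplicative ℤ)) := by
  rw [← WithZero.coe_pow, WithZero.coe_inj]
  apply Multiplicative.toAdd.injective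
  simp [toAdd_pow, mul_comm]

open Multiplicative in
lemma coe_zpow_ofAdd (c : Multiplicative ℤ) (k : ℤ) :
    ((c : WithZero (Multiplicative ℤ)) ^ k) = ((ofAdd (k * toAdd c) : Multiplicative ℤ) : WithZero (Multiplicative ℤ)) := by
  rw [← WithZero.coe_zpow, WithZero.coe_inj]
  apply Multiplicative.toAdd.injective
  simp [toAdd_zpow, mul_comm]

theorem divisor_of_z
    (Fq F : Type*) [Field Fq] [Fintype Fq] [Field F]
    (p : ℕ) (hp : p.Prime) [CharP Fq p]
    (m r lam : ℕ) (hm : 2 ≤ m) (hr : 2 < r) (hlam : 1 ≤ lam)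
    (hmp : Nat.Coprime m p) (hmrl : Nat.Coprime m (r * lam))
    (α : Fin r → Fq) (hα : Function.Injective α)
    [Algebra (RatFunc Fq) F] [Algebra (Polynomial Fq) F]
    [IsScalarTower (Polynomial Fq) (RatFunc Fq) F]
    (y : F)
    (hy : y ^ m = algebraMap (RatFunc Fq) F
      (algebraMap (Polynomial Fq) (RatFunc Fq) ((∏ i, (X - C (α i))) ^ lam)))
    (hdeg : Module.finrank (RatFunc Fq) F = m)
    (hgen : Algebra.adjoin (RatFunc Fq) ({y} : Set F) = ⊤)
    [IsDedekindDomain ↥(integralClosure (Polynomial Fq) F)]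
    [IsFractionRing ↥(integralClosure (Polynomial Fq) F) F]
    [Algebra ↥(Oinfty Fq) F] [IsScalarTower ↥(Oinfty Fq) (RatFunc Fq) F]
    [IsDedekindDomain ↥(integralClosure ↥(Oinfty Fq) F)]
    [IsFractionRing ↥(integralClosure ↥(Oinfty Fq) F) F]
    (A B : ℤ) (hAB : A * (lam : ℤ) + B * (m : ℤ) = 1) :
    ∀ z : F,
      z = y ^ A * (algebraMap (RatFunc Fq) F
        (algebraMap (Polynomial Fq) (RatFunc Fq) (∏ i, (X - C (α i))))) ^ B →
      (∀ i : Fin r, ∀ P : HeightOneSpectrum ↥(integralClosure (Polynomial Fq) F), (P).asIdeal.comap (algebraMap (Polynomial Fq) ↥(integralClosure (Polynomial Fq) F)) = Ideal.span {X - C (α i)} →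
          P.valuation F z = ((Multiplicative.ofAdd (-1 : ℤ) : Multiplicative ℤ) :
            WithZero (Multiplicative ℤ))) ∧
      (∀ Q : HeightOneSpectrum ↥(integralClosure (Polynomial Fq) F),
          (∀ i : Fin r, ¬ ((Q).asIdeal.comap (algebraMap (Polynomial Fq) ↥(integralClosure (Polynomial Fq) F)) = Ideal.span {X - C (α i)})) → Q.valuation F z = 1) ∧
      (∀ P : HeightOneSpectrum ↥(integralClosure ↥(Oinfty Fq) F),
          P.valuation F z = ((Multiplicative.ofAdd ((r : ℤ)) : Multiplicative ℤ) :
            WithZero (Multiplicative ℤ))) := by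
  intro z hz
  haveI hFD : FiniteDimensional (RatFunc Fq) F :=
    FiniteDimensional.of_finrank_pos (by rw [hdeg]; omega)
  set R := ↥(integralClosure (Polynomial Fq) F) with hR
  set S := ↥(integralClosure ↥(Oinfty Fq) F) with hS
  set fp : Polynomial Fq := ∏ i, (X - C (α i)) with hfp
  have hfp0 : fp ≠ 0 := by
    rw [hfp]
    exact Finset.prod_ne_zero_iff.mpr (fun i _ => X_sub_C_ne_zero (α i))
  set fF : F := algebraMap (RatFunc Fq) F (algebraMap (Polynomial Fq) (RatFunc Fq) fp)
    with hfFdef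
  have hKinj : Function.Injective (algebraMap (RatFunc Fq) F) :=
    (algebraMap (RatFunc Fq) F).injective
  have hpinj : Function.Injective (algebraMap (Polynomial Fq) (RatFunc Fq)) :=
    IsFractionRing.injective _ _
  have hfF0 : fF ≠ 0 := by
    rw [hfFdef]
    intro h
    have h1 : algebraMap (Polynomial Fq) (RatFunc Fq) fp = 0 := hKinj (by rw [h, map_zero])
    exact hfp0 (hpinj (by rw [h1, map_zero]))
  have hm0 : (m : ℤ) ≠ 0 := by exact_mod_cast (by omega : m ≠ 0)
  have hy0 : y ≠ 0 := by
    intro h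
    rw [h, zero_pow (by omega : m ≠ 0)] at hy
    have h1 : algebraMap (Polynomial Fq) (RatFunc Fq) (fp ^ lam) = 0 :=
      hKinj (by rw [← hy, map_zero])
    have h2 : fp ^ lam = 0 := hpinj (by rw [h1, map_zero])
    exact hfp0 (pow_eq_zero_iff (by omega : lam ≠ 0) |>.mp h2)
  have hzm : z ^ m = fF := by
    have hym : y ^ (m : ℤ) = fF ^ (lam : ℤ) := by
      rw [zpow_natCast, zpow_natCast, hy, hfFdef, ← map_pow, ← map_pow]
    have harith : (lam : ℤ) * A + B * m = 1 := by linarith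
    calc z ^ m = z ^ (m : ℤ) := (zpow_natCast z m).symm
      _ = (y ^ A) ^ (m : ℤ) * (fF ^ B) ^ (m : ℤ) := by rw [hz, mul_zpow]
      _ = (y ^ (m : ℤ)) ^ A * fF ^ (B * m) := by
          rw [← zpow_mul, ← zpow_mul, mul_comm A (m : ℤ), zpow_mul, ← zpow_mul]
      _ = fF ^ ((lam : ℤ) * A + B * m) := by
          rw [hym, ← zpow_mul, ← zpow_add₀ hfF0]
      _ = fF := by rw [harith, zpow_one]
  have hz0 : z ≠ 0 := by
    intro h
    rw [h, zero_pow (by omega : m ≠ 0)] at hzm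
    exact hfF0 hzm.symm
  -- finite place helpers
  have hval_poly : ∀ (w : HeightOneSpectrum ↥(integralClosure (Polynomial Fq) F)) (h : Polynomial Fq),
      w.valuation F (algebraMap (RatFunc Fq) F (algebraMap (Polynomial Fq) (RatFunc Fq) h))
        = w.intValuation (algebraMap (Polynomial Fq) ↥(integralClosure (Polynomial Fq) F) h) := by
    intro w h
    rw [← IsScalarTower.algebraMap_apply,
      IsScalarTower.algebraMap_apply (Polynomial Fq) ↥(integralClosure (Polynomial Fq) F) F,
      w.valuation_of_algebraMap]
  have hRinj : Function.Injective
      (algebraMap (Polynomial Fq) ↥(integralClosure (Polynomial Fq) F)) := by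
    have hWF : Function.Injective (algebraMap (Polynomial Fq) F) := by
      rw [IsScalarTower.algebraMap_eq (Polynomial Fq) (RatFunc Fq) F]
      exact hKinj.comp hpinj
    intro a b hab
    apply hWF
    rw [IsScalarTower.algebraMap_apply (Polynomial Fq) ↥(integralClosure (Polynomial Fq) F) F, hab,
      ← IsScalarTower.algebraMap_apply]
  have hcomap_eq : ∀ (w : HeightOneSpectrum ↥(integralClosure (Polynomial Fq) F)) (i : Fin r),
      algebraMap (Polynomial Fq) ↥(integralClosure (Polynomial Fq) F) (X - C (α i)) ∈ w.asIdeal →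
      w.asIdeal.comap (algebraMap (Polynomial Fq) ↥(integralClosure (Polynomial Fq) F))
        = Ideal.span {X - C (α i)} := by
    intro w i hmem
    have hle : Ideal.span {X - C (α i)} ≤ w.asIdeal.comap
        (algebraMap (Polynomial Fq) ↥(integralClosure (Polynomial Fq) F)) :=
      (Ideal.span_singleton_le_iff_mem _).mpr (Ideal.mem_comap.mpr hmem)
    have hne : w.asIdeal.comap (algebraMap (Polynomial Fq) ↥(integralClosure (Polynomial Fq) F))
        ≠ ⊤ := by
      intro h
      have h1 : (1 : ↥(integralClosure (Polynomial Fq) F)) ∈ w.asIdeal := by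
        have h2 := Ideal.mem_comap.mp (h ▸ (Submodule.mem_top : (1 : Polynomial Fq) ∈ ⊤))
        simpa using h2
      exact w.isPrime.ne_top ((Ideal.eq_top_iff_one _).mpr h1)
    exact ((PrincipalIdealRing.isMaximal_of_irreducible
      (irreducible_X_sub_C (α i))).eq_of_le hne hle).symm
  have hint_one : ∀ (w : HeightOneSpectrum ↥(integralClosure (Polynomial Fq) F)) (i : Fin r),
      w.asIdeal.comap (algebraMap (Polynomial Fq) ↥(integralClosure (Polynomial Fq) F))
        ≠ Ideal.span {X - C (α i)} →
      w.intValuation (algebraMap (Polynomial Fq) ↥(integralClosure (Polynomial Fq) F)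
        (X - C (α i))) = 1 := by
    intro w i h
    rw [int_val_eq_one_iff]
    intro hmem
    exact h (hcomap_eq w i hmem)
  have hfF_val : ∀ (w : HeightOneSpectrum ↥(integralClosure (Polynomial Fq) F)),
      w.valuation F fF = ∏ i, w.intValuation
        (algebraMap (Polynomial Fq) ↥(integralClosure (Polynomial Fq) F) (X - C (α i))) := by
    intro w
    rw [hfFdef, hval_poly w fp, hfp, map_prod, map_prod]
  -- part 2
  have part2 : ∀ Q : HeightOneSpectrum ↥(integralClosure (Polynomial Fq) F),
      (∀ i : Fin r, ¬ (Q.asIdeal.comap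
        (algebraMap (Polynomial Fq) ↥(integralClosure (Polynomial Fq) F))
          = Ideal.span {X - C (α i)})) → Q.valuation F z = 1 := by
    intro Q hQ
    have h1 : Q.valuation F z ≠ 0 := (Valuation.ne_zero_iff _).mpr hz0
    obtain ⟨c, hc⟩ := WithZero.ne_zero_iff_exists.mp h1
    have hfv : Q.valuation F fF = 1 := by
      rw [hfF_val Q]
      exact Finset.prod_eq_one (fun i _ => hint_one Q i (hQ i))
    have h2 : (Q.valuation F z) ^ m = 1 := by rw [← map_pow, hzm, hfv]
    rw [← hc, ← WithZero.coe_pow, ← WithZero.coe_one, WithZero.coe_inj] at h2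
    have h3 : (m : ℤ) • Multiplicative.toAdd c = 0 := by
      have := congrArg Multiplicative.toAdd h2
      simpa [toAdd_pow] using this
    have h4 : Multiplicative.toAdd c = 0 := by
      rcases smul_eq_zero.mp h3 with h | h
      · exact absurd h hm0
      · exact h
    have h5 : c = 1 := by
      apply Multiplicative.toAdd.injective
      simpa using h4
    rw [← hc, h5, WithZero.coe_one]
  -- part 1
  have part1 : ∀ i : Fin r, ∀ P : HeightOneSpectrum ↥(integralClosure (Polynomial Fq) F),
      P.asIdeal.comap (algebraMap (Polynomial Fq) ↥(integralClosure (Polynomial Fq) F))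
        = Ideal.span {X - C (α i)} →
      P.valuation F z = ((Multiplicative.ofAdd (-1 : ℤ) : Multiplicative ℤ) :
        WithZero (Multiplicative ℤ)) := by
    intro i P hP
    have hmemπ : algebraMap (Polynomial Fq) ↥(integralClosure (Polynomial Fq) F)
        (X - C (α i)) ∈ P.asIdeal :=
      Ideal.mem_comap.mp (by rw [hP]; exact Ideal.mem_span_singleton_self _)
    have hπ0 : algebraMap (Polynomial Fq) ↥(integralClosure (Polynomial Fq) F)
        (X - C (α i)) ≠ 0 := by
      intro h
      exact X_sub_C_ne_zero (α i) (hRinj (by rw [h, map_zero]))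
    have hπne : P.intValuation (algebraMap (Polynomial Fq) ↥(integralClosure (Polynomial Fq) F)
        (X - C (α i))) ≠ 0 := by
      rw [IsDedekindDomain.HeightOneSpectrum.intValuation_apply]
      exact P.intValuation_ne_zero _ hπ0
    obtain ⟨cπ, hcπ⟩ := WithZero.ne_zero_iff_exists.mp hπne
    have hπlt : P.intValuation (algebraMap (Polynomial Fq) ↥(integralClosure (Polynomial Fq) F)
        (X - C (α i))) < 1 := by
      rw [IsDedekindDomain.HeightOneSpectrum.intValuation_apply]
      exact (P.intValuation_lt_one_iff_dvd _).mpr (Ideal.dvd_span_singleton.mpr hmemπ)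
    obtain ⟨e', he'def⟩ : ∃ e' : ℤ, Multiplicative.toAdd cπ = -e' :=
      ⟨-Multiplicative.toAdd cπ, by ring⟩
    have he1 : 1 ≤ e' := by
      have hlt : (cπ : WithZero (Multiplicative ℤ)) < 1 := hcπ ▸ hπlt
      rw [← WithZero.coe_one, WithZero.coe_lt_coe] at hlt
      have : Multiplicative.toAdd cπ < 0 := by
        rwa [← toAdd_one (α := ℤ), Multiplicative.toAdd_lt]
      omega
    have hfvP : P.valuation F fF = (cπ : WithZero (Multiplicative ℤ)) := by
      rw [hfF_val P]
      rw [Finset.prod_eq_single i _ (fun h => absurd (Finset.mem_univ i) h)]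
      · exact hcπ.symm
      · intro j _ hji
        apply hint_one P j
        intro hcom
        rw [hP] at hcom
        have hmem2 : X - C (α j) ∈ Ideal.span {X - C (α i)} :=
          hcom ▸ Ideal.mem_span_singleton_self _
        have h6 := Polynomial.dvd_iff_isRoot.mp (Ideal.mem_span_singleton.mp hmem2)
        simp only [Polynomial.IsRoot, Polynomial.eval_sub, Polynomial.eval_X,
          Polynomial.eval_C, sub_eq_zero] at h6
        exact hji (hα h6.symm)
    have hpz : P.valuation F z ≠ 0 := (Valuation.ne_zero_iff _).mpr hz0
    obtain ⟨cz, hcz⟩ := WithZero.ne_zero_iff_exists.mp hpz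
    have h2 : (cz : WithZero (Multiplicative ℤ)) ^ m = (cπ : WithZero (Multiplicative ℤ)) := by
      rw [hcz, ← map_pow, hzm, hfvP]
    have h3 : (m : ℤ) * Multiplicative.toAdd cz = Multiplicative.toAdd cπ := by
      rw [← WithZero.coe_pow, WithZero.coe_inj] at h2
      have := congrArg Multiplicative.toAdd h2
      simpa [toAdd_pow, mul_comm] using this
    obtain ⟨n, hndef⟩ : ∃ n : ℤ, Multiplicative.toAdd cz = -n :=
      ⟨-Multiplicative.toAdd cz, by ring⟩
    rw [hndef, he'def] at h3
    have hmn : (m : ℤ) * n = e' := by linear_combination -h3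
    have hn1 : 1 ≤ n := by
      by_contra hcon
      push_neg at hcon
      have hmpos : (0 : ℤ) < m := by exact_mod_cast (by omega : 0 < m)
      nlinarith
    have hn : n = 1 := by
      by_contra hne1
      have hn2 : 2 ≤ n := by omega
      have hKval : ∀ g : RatFunc Fq, g ≠ 0 → ∃ k : ℤ, P.valuation F (algebraMap (RatFunc Fq) F g)
          = ((Multiplicative.ofAdd (e' * k) : Multiplicative ℤ) : WithZero (Multiplicative ℤ)) := by
        have hKp : ∀ h : Polynomial Fq, h ≠ 0 → ∃ k : ℤ,
            P.valuation F (algebraMap (RatFunc Fq) F (algebraMap (Polynomial Fq) (RatFunc Fq) h))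
            = ((Multiplicative.ofAdd (e' * k) : Multiplicative ℤ) :
              WithZero (Multiplicative ℤ)) := by
          intro h hh0
          refine ⟨-(rootMultiplicity (α i) h : ℤ), ?_⟩
          rw [hval_poly]
          conv_lhs => rw [← Polynomial.pow_mul_divByMonic_rootMultiplicity_eq h (α i)]
          rw [map_mul, map_mul, map_pow, map_pow]
          have hs1 : P.intValuation (algebraMap (Polynomial Fq)
              ↥(integralClosure (Polynomial Fq) F)
              (h /ₘ (X - C (α i)) ^ rootMultiplicity (α i) h)) = 1 := by
            rw [int_val_eq_one_iff]
            intro hmem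
            have h5 : (h /ₘ (X - C (α i)) ^ rootMultiplicity (α i) h)
                ∈ Ideal.span {X - C (α i)} := by
              rw [← hP]; exact Ideal.mem_comap.mpr hmem
            have h6 := Polynomial.dvd_iff_isRoot.mp (Ideal.mem_span_singleton.mp h5)
            exact Polynomial.eval_divByMonic_pow_rootMultiplicity_ne_zero (α i) hh0 h6
          rw [hs1, mul_one, ← hcπ, coe_pow_ofAdd, WithZero.coe_inj]
          congr 1
          rw [he'def]
          ring
        intro g hg0
        obtain ⟨k1, hk1⟩ := hKp g.num (RatFunc.num_ne_zero hg0)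
        obtain ⟨k2, hk2⟩ := hKp g.denom g.denom_ne_zero
        refine ⟨k1 - k2, ?_⟩
        conv_lhs => rw [← RatFunc.num_div_denom g]
        rw [map_div₀, map_div₀, hk1, hk2, ← WithZero.coe_div, WithZero.coe_inj,
          ← ofAdd_sub]
        congr 1
        ring
      obtain ⟨u, hu⟩ := P.intValuation_exists_uniformizer
      have huF : P.valuation F (algebraMap ↥(integralClosure (Polynomial Fq) F) F u)
          = ((Multiplicative.ofAdd (-1 : ℤ) : Multiplicative ℤ) :
            WithZero (Multiplicative ℤ)) := by
        rw [P.valuation_of_algebraMap, hu]; rfl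
      have hxval : ∀ i0 : Fin (m + 1),
          P.valuation F ((Fin.cases (algebraMap ↥(integralClosure (Polynomial Fq) F) F u)
            (fun j : Fin m => z ^ (j : ℕ)) : Fin (m + 1) → F) i0)
          = ((Multiplicative.ofAdd ((Fin.cases (-1 : ℤ)
              (fun j : Fin m => -(n * (j : ℕ))) : Fin (m + 1) → ℤ) i0) : Multiplicative ℤ) :
            WithZero (Multiplicative ℤ)) := by
        intro i0
        induction i0 using Fin.cases with
        | zero => simpa using huF
        | succ j =>
          simp only [Fin.cases_succ]
          rw [map_pow, ← hcz, coe_pow_ofAdd, WithZero.coe_inj]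
          congr 1
          rw [hndef]
          ring
      have hdist : ∀ i0 j0 : Fin (m + 1), ∀ k : ℤ,
          (Fin.cases (-1 : ℤ) (fun j : Fin m => -(n * (j : ℕ))) : Fin (m + 1) → ℤ) i0
          = (Fin.cases (-1 : ℤ) (fun j : Fin m => -(n * (j : ℕ))) : Fin (m + 1) → ℤ) j0
            + e' * k → i0 = j0 := by
        intro i0 j0 k
        induction i0 using Fin.cases with
        | zero =>
          induction j0 using Fin.cases with
          | zero => intro _; rfl
          | succ j' =>
            intro hk
            exfalso
            simp only [Fin.cases_zero, Fin.cases_succ] at hk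
            rw [← hmn] at hk
            have hdvd : n ∣ 1 := ⟨(j' : ℤ) - m * k, by linear_combination -hk⟩
            have := Int.le_of_dvd one_pos hdvd
            omega
        | succ i' =>
          induction j0 using Fin.cases with
          | zero =>
            intro hk
            exfalso
            simp only [Fin.cases_zero, Fin.cases_succ] at hk
            rw [← hmn] at hk
            have hdvd : n ∣ 1 := ⟨(i' : ℤ) + (m : ℤ) * k, by linear_combination hk⟩
            have := Int.le_of_dvd one_pos hdvd
            omega
          | succ j' =>
            intro hk
            simp only [Fin.cases_succ] at hk
            rw [← hmn] at hk
            have hn0 : n ≠ 0 := by omega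
            have hmul : n * ((j' : ℤ) - (i' : ℤ)) = n * ((m : ℤ) * k) := by linear_combination hk
            have hmk : ((j' : ℤ) - (i' : ℤ)) = (m : ℤ) * k := mul_left_cancel₀ hn0 hmul
            have hz' : ((j' : ℤ) - (i' : ℤ)) = 0 := by
              apply Int.eq_zero_of_abs_lt_dvd ⟨k, hmk⟩
              have hi := i'.isLt
              have hj := j'.isLt
              rw [abs_lt]
              omega
            have : i' = j' := by
              apply Fin.ext
              omega
            rw [this]
      have hcard := card_le_of_distinct_val (K := RatFunc Fq) (P.valuation F) (d := e') hKval
        (Fin.cases (algebraMap ↥(integralClosure (Polynomial Fq) F) F u)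
          (fun j : Fin m => z ^ (j : ℕ)))
        (Fin.cases (-1 : ℤ) (fun j : Fin m => -(n * (j : ℕ)))) hxval hdist
      rw [hdeg] at hcard
      omega
    have hcz1 : cz = Multiplicative.ofAdd (-1 : ℤ) := by
      apply Multiplicative.toAdd.injective
      simp only [toAdd_ofAdd]
      rw [hndef, hn]
    rw [← hcz, hcz1]
  -- part 3
  have part3 : ∀ P : HeightOneSpectrum ↥(integralClosure ↥(Oinfty Fq) F),
      P.valuation F z = ((Multiplicative.ofAdd ((r : ℤ)) : Multiplicative ℤ) :
        WithZero (Multiplicative ℤ)) := by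
    intro P
    letI := Classical.decEq (RatFunc Fq)
    have hXne : (RatFunc.X : RatFunc Fq) ≠ 0 := RatFunc.X_ne_zero
    have hvX : FunctionField.inftyValuation Fq (RatFunc.X : RatFunc Fq)
        = ((Multiplicative.ofAdd (1 : ℤ) : Multiplicative ℤ) : WithZero (Multiplicative ℤ)) := by
      exact RatFunc.inftyValuation.X (F := Fq)
    have halg : ∀ (c : RatFunc Fq) (hc : c ∈ Oinfty Fq), algebraMap (RatFunc Fq) F c
        = algebraMap ↥(integralClosure ↥(Oinfty Fq) F) F
          (algebraMap ↥(Oinfty Fq) ↥(integralClosure ↥(Oinfty Fq) F)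
            (⟨c, hc⟩ : ↥(Oinfty Fq))) := by
      intro c hc
      rw [← IsScalarTower.algebraMap_apply ↥(Oinfty Fq) ↥(integralClosure ↥(Oinfty Fq) F) F,
        IsScalarTower.algebraMap_apply ↥(Oinfty Fq) (RatFunc Fq) F]
      rfl
    have hOle : ∀ (c : RatFunc Fq) (hc : c ∈ Oinfty Fq),
        P.valuation F (algebraMap (RatFunc Fq) F c) ≤ 1 := by
      intro c hc
      rw [halg c hc, P.valuation_of_algebraMap]
      exact P.intValuation_le_one _
    have hXinv_mem : (RatFunc.X : RatFunc Fq)⁻¹ ∈ Oinfty Fq := by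
      show FunctionField.inftyValuation Fq _ ≤ 1
      rw [map_inv₀, hvX, ← WithZero.coe_inv,
        ← WithZero.coe_one, WithZero.coe_le_coe, ← ofAdd_neg]
      rw [show (1 : Multiplicative ℤ) = Multiplicative.ofAdd (0 : ℤ) from rfl,
        Multiplicative.ofAdd_le]
      omega
    obtain ⟨s0, hs0mem, hs0ne⟩ := Submodule.exists_mem_ne_zero_of_ne_bot P.ne_bot
    have hq : P.asIdeal.comap
        (algebraMap ↥(Oinfty Fq) ↥(integralClosure ↥(Oinfty Fq) F)) ≠ ⊥ :=
      Ideal.comap_ne_bot_of_integral_mem hs0ne hs0mem (Algebra.IsIntegral.isIntegral s0)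
    obtain ⟨t0, ht0mem, ht0ne⟩ := Submodule.exists_mem_ne_zero_of_ne_bot hq
    have htmemq : (⟨(RatFunc.X : RatFunc Fq)⁻¹, hXinv_mem⟩ : ↥(Oinfty Fq)) ∈
        P.asIdeal.comap (algebraMap ↥(Oinfty Fq) ↥(integralClosure ↥(Oinfty Fq) F)) := by
      have ht0val_ne : ((t0 : RatFunc Fq)) ≠ 0 := fun h => ht0ne (Subtype.ext h)
      have hv1 : FunctionField.inftyValuation Fq (t0 : RatFunc Fq) ≤ 1 := t0.2
      have hvne : FunctionField.inftyValuation Fq (t0 : RatFunc Fq) ≠ 0 :=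
        (Valuation.ne_zero_iff _).mpr ht0val_ne
      obtain ⟨c0, hc0⟩ := WithZero.ne_zero_iff_exists.mp hvne
      obtain ⟨k0, hk0⟩ : ∃ k0 : ℕ, Multiplicative.toAdd c0 = -(k0 : ℤ) := by
        have hle : Multiplicative.toAdd c0 ≤ 0 := by
          have : (c0 : WithZero (Multiplicative ℤ)) ≤ 1 := hc0 ▸ hv1
          rw [← WithZero.coe_one, WithZero.coe_le_coe] at this
          rwa [← toAdd_one (α := ℤ), Multiplicative.toAdd_le]
        exact ⟨(-Multiplicative.toAdd c0).toNat, by omega⟩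
      have huKval : FunctionField.inftyValuation Fq
          ((t0 : RatFunc Fq) * RatFunc.X ^ k0) = 1 := by
        rw [map_mul, map_pow, hvX, ← hc0, coe_pow_ofAdd, ← WithZero.coe_mul,
          ← WithZero.coe_one, WithZero.coe_inj]
        apply Multiplicative.toAdd.injective
        simp only [toAdd_mul, toAdd_ofAdd, toAdd_one]
        omega
      have huKne : ((t0 : RatFunc Fq) * RatFunc.X ^ k0) ≠ 0 :=
        mul_ne_zero ht0val_ne (pow_ne_zero _ hXne)
      have huKinv_mem : ((t0 : RatFunc Fq) * RatFunc.X ^ k0)⁻¹ ∈ Oinfty Fq := by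
        show FunctionField.inftyValuation Fq _ ≤ 1
        rw [map_inv₀, huKval]
        simp
      have hkey : (⟨(RatFunc.X : RatFunc Fq)⁻¹, hXinv_mem⟩ : ↥(Oinfty Fq)) ^ k0
          = t0 * ⟨((t0 : RatFunc Fq) * RatFunc.X ^ k0)⁻¹, huKinv_mem⟩ := by
        apply Subtype.ext
        push_cast
        rw [inv_pow]
        field_simp
      have hpow : (⟨(RatFunc.X : RatFunc Fq)⁻¹, hXinv_mem⟩ : ↥(Oinfty Fq)) ^ k0 ∈
          P.asIdeal.comap (algebraMap ↥(Oinfty Fq) ↥(integralClosure ↥(Oinfty Fq) F)) := by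
        rw [hkey]
        exact Ideal.mul_mem_right _ _ ht0mem
      exact Ideal.IsPrime.mem_of_pow_mem inferInstance k0 hpow
    have htmemP : algebraMap ↥(Oinfty Fq) ↥(integralClosure ↥(Oinfty Fq) F)
        (⟨(RatFunc.X : RatFunc Fq)⁻¹, hXinv_mem⟩ : ↥(Oinfty Fq)) ∈ P.asIdeal :=
      Ideal.mem_comap.mp htmemq
    have hvtlt : P.valuation F (algebraMap (RatFunc Fq) F (RatFunc.X : RatFunc Fq)⁻¹) < 1 := by
      rw [halg _ hXinv_mem, P.valuation_of_algebraMap,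
        IsDedekindDomain.HeightOneSpectrum.intValuation_apply]
      exact (P.intValuation_lt_one_iff_dvd _).mpr (Ideal.dvd_span_singleton.mpr htmemP)
    have hxFne : P.valuation F (algebraMap (RatFunc Fq) F (RatFunc.X : RatFunc Fq)) ≠ 0 :=
      (Valuation.ne_zero_iff _).mpr (by
        intro h
        exact hXne (hKinj (by rw [h, map_zero])))
    obtain ⟨cx, hcx⟩ := WithZero.ne_zero_iff_exists.mp hxFne
    obtain ⟨e', he'⟩ : ∃ e' : ℤ, Multiplicative.toAdd cx = e' := ⟨Multiplicative.toAdd cx, rfl⟩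
    have he1 : 1 ≤ e' := by
      have h4 : P.valuation F (algebraMap (RatFunc Fq) F (RatFunc.X : RatFunc Fq)⁻¹)
          = (cx : WithZero (Multiplicative ℤ))⁻¹ := by
        rw [map_inv₀, map_inv₀, hcx]
      rw [h4, ← WithZero.coe_inv, ← WithZero.coe_one, WithZero.coe_lt_coe] at hvtlt
      have h5 : Multiplicative.toAdd (cx⁻¹) < 0 := by
        rwa [← toAdd_one (α := ℤ), Multiplicative.toAdd_lt]
      rw [toAdd_inv] at h5
      omega
    have hKval : ∀ g : RatFunc Fq, g ≠ 0 →
        P.valuation F (algebraMap (RatFunc Fq) F g)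
        = ((Multiplicative.ofAdd (e' * g.intDegree) : Multiplicative ℤ) :
          WithZero (Multiplicative ℤ)) := by
      intro g hg
      have hvg : FunctionField.inftyValuation Fq g
          = ((Multiplicative.ofAdd g.intDegree : Multiplicative ℤ) :
            WithZero (Multiplicative ℤ)) := by
        exact RatFunc.inftyValuation_of_nonzero (F := Fq) hg
      have huKne : g * RatFunc.X ^ (-g.intDegree) ≠ 0 :=
        mul_ne_zero hg (zpow_ne_zero _ hXne)
      have huKval : FunctionField.inftyValuation Fq (g * RatFunc.X ^ (-g.intDegree)) = 1 := by
        rw [map_mul, map_zpow₀, hvX, hvg, coe_zpow_ofAdd, ← WithZero.coe_mul,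
          ← WithZero.coe_one, WithZero.coe_inj]
        apply Multiplicative.toAdd.injective
        simp only [toAdd_mul, toAdd_ofAdd, toAdd_one]
        ring
      have hmem1 : g * RatFunc.X ^ (-g.intDegree) ∈ Oinfty Fq := by
        show FunctionField.inftyValuation Fq _ ≤ 1
        rw [huKval]
      have hmem2 : (g * RatFunc.X ^ (-g.intDegree))⁻¹ ∈ Oinfty Fq := by
        show FunctionField.inftyValuation Fq _ ≤ 1
        rw [map_inv₀, huKval]
        simp
      have hprod : P.valuation F (algebraMap (RatFunc Fq) F (g * RatFunc.X ^ (-g.intDegree)))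
          * P.valuation F (algebraMap (RatFunc Fq) F (g * RatFunc.X ^ (-g.intDegree))⁻¹) = 1 := by
        rw [← map_mul, ← map_mul, mul_inv_cancel₀ huKne, map_one, map_one]
      have huF1 : P.valuation F (algebraMap (RatFunc Fq) F (g * RatFunc.X ^ (-g.intDegree)))
          = 1 := by
        refine le_antisymm (hOle _ hmem1) ?_
        calc (1 : WithZero (Multiplicative ℤ)) = _ := hprod.symm
          _ ≤ P.valuation F (algebraMap (RatFunc Fq) F (g * RatFunc.X ^ (-g.intDegree))) * 1 :=
            mul_le_mul_right (hOle _ hmem2) _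
          _ = _ := mul_one _
      have hg_eq : g = (g * RatFunc.X ^ (-g.intDegree)) * RatFunc.X ^ g.intDegree := by
        rw [mul_assoc, ← zpow_add₀ hXne]
        simp
      conv_lhs => rw [hg_eq]
      rw [map_mul, map_mul, huF1, one_mul, map_zpow₀, map_zpow₀, ← hcx, coe_zpow_ofAdd,
        WithZero.coe_inj]
      congr 1
      rw [he']
      ring
    have hfpKne : (algebraMap (Polynomial Fq) (RatFunc Fq) fp) ≠ 0 := by
      intro h
      exact hfp0 (hpinj (by rw [h, map_zero]))
    have hdegf : (algebraMap (Polynomial Fq) (RatFunc Fq) fp).intDegree = r := by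
      rw [RatFunc.intDegree_polynomial, hfp,
        Polynomial.natDegree_prod _ _ (fun i _ => X_sub_C_ne_zero (α i))]
      simp [Polynomial.natDegree_X_sub_C]
    have hvfF : P.valuation F fF = ((Multiplicative.ofAdd (e' * r) : Multiplicative ℤ) :
        WithZero (Multiplicative ℤ)) := by
      rw [hfFdef, hKval _ hfpKne, hdegf]
    have hpz : P.valuation F z ≠ 0 := (Valuation.ne_zero_iff _).mpr hz0
    obtain ⟨cz, hcz⟩ := WithZero.ne_zero_iff_exists.mp hpz
    have h2 : (cz : WithZero (Multiplicative ℤ)) ^ m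
        = ((Multiplicative.ofAdd (e' * r) : Multiplicative ℤ) :
          WithZero (Multiplicative ℤ)) := by
      rw [hcz, ← map_pow, hzm, hvfF]
    have h3 : (m : ℤ) * Multiplicative.toAdd cz = e' * r := by
      rw [← WithZero.coe_pow, WithZero.coe_inj] at h2
      have := congrArg Multiplicative.toAdd h2
      simpa [toAdd_pow, mul_comm] using this
    have hco : Nat.Coprime m r := Nat.Coprime.coprime_dvd_right (dvd_mul_right r lam) hmrl
    have hdvd2 : (m : ℤ) ∣ e' := by
      refine Int.dvd_of_dvd_mul_left_of_gcd_one (b := e') (c := (r : ℤ))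
        ⟨Multiplicative.toAdd cz, h3.symm⟩ ?_
      rw [Int.gcd_natCast_natCast]
      exact hco
    obtain ⟨kk, hkk⟩ := hdvd2
    have hmpos : (0 : ℤ) < m := by exact_mod_cast (by omega : 0 < m)
    have hkk1 : 1 ≤ kk := by nlinarith
    have haz : Multiplicative.toAdd cz = kk * r := by
      have h5 : (m : ℤ) * Multiplicative.toAdd cz = (m : ℤ) * (kk * r) := by
        rw [h3, hkk]; ring
      exact mul_left_cancel₀ hm0 h5
    have hkkeq : kk = 1 := by
      by_contra hne1
      have hkk2 : 2 ≤ kk := by omega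
      obtain ⟨u, hu⟩ := P.intValuation_exists_uniformizer
      have huF : P.valuation F (algebraMap ↥(integralClosure ↥(Oinfty Fq) F) F u)
          = ((Multiplicative.ofAdd (-1 : ℤ) : Multiplicative ℤ) :
            WithZero (Multiplicative ℤ)) := by
        rw [P.valuation_of_algebraMap, hu]; rfl
      have hKval' : ∀ g : RatFunc Fq, g ≠ 0 → ∃ k : ℤ,
          P.valuation F (algebraMap (RatFunc Fq) F g)
          = ((Multiplicative.ofAdd (e' * k) : Multiplicative ℤ) :
            WithZero (Multiplicative ℤ)) :=
        fun g hg => ⟨g.intDegree, hKval g hg⟩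
      have hxval : ∀ i0 : Fin (m + 1),
          P.valuation F ((Fin.cases (algebraMap ↥(integralClosure ↥(Oinfty Fq) F) F u)
            (fun j : Fin m => z ^ (j : ℕ)) : Fin (m + 1) → F) i0)
          = ((Multiplicative.ofAdd ((Fin.cases (-1 : ℤ)
              (fun j : Fin m => kk * r * (j : ℕ)) : Fin (m + 1) → ℤ) i0) : Multiplicative ℤ) :
            WithZero (Multiplicative ℤ)) := by
        intro i0
        induction i0 using Fin.cases with
        | zero => simpa using huF
        | succ j =>
          simp only [Fin.cases_succ]
          rw [map_pow, ← hcz, coe_pow_ofAdd, WithZero.coe_inj]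
          congr 1
          rw [haz]
          ring
      have hdist : ∀ i0 j0 : Fin (m + 1), ∀ k : ℤ,
          (Fin.cases (-1 : ℤ) (fun j : Fin m => kk * r * (j : ℕ)) : Fin (m + 1) → ℤ) i0
          = (Fin.cases (-1 : ℤ) (fun j : Fin m => kk * r * (j : ℕ)) : Fin (m + 1) → ℤ) j0
            + e' * k → i0 = j0 := by
        intro i0 j0 k
        induction i0 using Fin.cases with
        | zero =>
          induction j0 using Fin.cases with
          | zero => intro _; rfl
          | succ j' =>
            intro hk
            exfalso
            simp only [Fin.cases_zero, Fin.cases_succ] at hk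
            rw [hkk] at hk
            have hdvdkk : kk ∣ 1 := ⟨-(r * (j' : ℤ)) - (m : ℤ) * k, by linear_combination -hk⟩
            have := Int.le_of_dvd one_pos hdvdkk
            omega
        | succ i' =>
          induction j0 using Fin.cases with
          | zero =>
            intro hk
            exfalso
            simp only [Fin.cases_zero, Fin.cases_succ] at hk
            rw [hkk] at hk
            have hdvdkk : kk ∣ 1 := ⟨(m : ℤ) * k - r * (i' : ℤ), by linear_combination hk⟩
            have := Int.le_of_dvd one_pos hdvdkk
            omega
          | succ j' =>
            intro hk
            simp only [Fin.cases_succ] at hk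
            rw [hkk] at hk
            have hkk0 : kk ≠ 0 := by omega
            have hmul : kk * ((r : ℤ) * ((i' : ℤ) - (j' : ℤ))) = kk * ((m : ℤ) * k) := by
              linear_combination hk
            have hmk : (r : ℤ) * ((i' : ℤ) - (j' : ℤ)) = (m : ℤ) * k :=
              mul_left_cancel₀ hkk0 hmul
            have hdvd3 : (m : ℤ) ∣ ((i' : ℤ) - (j' : ℤ)) := by
              refine Int.dvd_of_dvd_mul_left_of_gcd_one (b := (i' : ℤ) - (j' : ℤ))
                (c := (r : ℤ)) ⟨k, by linear_combination hmk⟩ ?_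
              rw [Int.gcd_natCast_natCast]
              exact hco
            have hz' : ((i' : ℤ) - (j' : ℤ)) = 0 := by
              apply Int.eq_zero_of_abs_lt_dvd hdvd3
              have hi := i'.isLt
              have hj := j'.isLt
              rw [abs_lt]
              omega
            have : i' = j' := by
              apply Fin.ext
              omega
            rw [this]
      have hcard := card_le_of_distinct_val (K := RatFunc Fq) (P.valuation F) (d := e') hKval'
        (Fin.cases (algebraMap ↥(integralClosure ↥(Oinfty Fq) F) F u)
          (fun j : Fin m => z ^ (j : ℕ)))
        (Fin.cases (-1 : ℤ) (fun j : Fin m => kk * r * (j : ℕ))) hxval hdist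
      rw [hdeg] at hcard
      omega
    have hcz1 : cz = Multiplicative.ofAdd ((r : ℤ)) := by
      apply Multiplicative.toAdd.injective
      simp only [toAdd_ofAdd]
      rw [haz, hkkeq, one_mul]
    rw [← hcz, hcz1]
  exact ⟨part1, part2, part3⟩
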